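/- The set Ḡ = ℂ^d × G, endowed with the operation (u,γ) ⋆ (v,δ) = (v + δ_∅ u, γ★(Ξ_u δ)), is a (noncommutative) group with unit (0,1); moreover ℂ^d × {1} and {0} × G are subgroups of Ḡ. -/

import Mathlib

open scoped BigOperators

/-- Convolution product on `ℂ^W`: `(δ★δ′)_w = Σ_{w=w₁w₂} δ_{w₁} δ′_{w₂}`. -/
noncomputable def conv {A : Type*} (x y : List A → ℂ) : List A → ℂ :=
  fun w => ∑ i ∈ Finset.range (w.length + 1), x (w.take i) * y (w.drop i)

/-- Shuffle product of two words, as a multiset of words. -/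
def shuffle {A : Type*} : List A → List A → Multiset (List A)
  | [], w => {w}
  | w, [] => {w}
  | a :: u, b :: v =>
      ((shuffle u (b :: v)).map (a :: ·)) + ((shuffle (a :: u) v).map (b :: ·))

/-- Membership in the group `G`: the shuffle relations with `γ_∅ = 1`. -/
def isGrp {A : Type*} (γ : List A → ℂ) : Prop :=
  γ [] = 1 ∧ ∀ w w' : List A, γ w * γ w' = ((shuffle w w').map γ).sum

/-- Membership in the Lie algebra `𝔤`. -/
def isLie {A : Type*} (β : List A → ℂ) : Prop :=
  β [] = 0 ∧ ∀ w w' : List A, w ≠ [] → w' ≠ [] → ((shuffle w w').map β).sum = 0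

/-- The unit `1` of the convolution product. -/
def unitCW {A : Type*} : List A → ℂ := fun w => match w with | [] => 1 | _ => 0

/-- `ν^v_ℓ = Σ_j v_j ν_{j,ℓ}` for a letter `ℓ`. -/
noncomputable def nuL {A : Type*} {d : ℕ} (ν : Fin d → A → ℂ) (v : Fin d → ℂ) (ℓ : A) : ℂ :=
  ∑ j, v j * ν j ℓ

/-- `ν^v_w = ν^v_{ℓ₁} + ⋯ + ν^v_{ℓ_n}` for a word `w = ℓ₁⋯ℓ_n`. -/
noncomputable def nuW {A : Type*} {d : ℕ} (ν : Fin d → A → ℂ) (v : Fin d → ℂ) (w : List A) : ℂ :=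
  (w.map (nuL ν v)).sum

/-- The operator `Ξ_v`: `(Ξ_v δ)_w = exp(ν^v_w) δ_w`. -/
noncomputable def XiOp {A : Type*} {d : ℕ} (ν : Fin d → A → ℂ) (v : Fin d → ℂ)
    (δ : List A → ℂ) : List A → ℂ :=
  fun w => Complex.exp (nuW ν v w) * δ w

/-- The operator `ξ_v`: `(ξ_v δ)_w = ν^v_w δ_w`. -/
noncomputable def xiOp {A : Type*} {d : ℕ} (ν : Fin d → A → ℂ) (v : Fin d → ℂ)
    (δ : List A → ℂ) : List A → ℂ :=
  fun w => nuW ν v w * δ w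

/-- The operation `(u,γ) ⋆ (v,δ) = (v + δ_∅ u, γ★(Ξ_u δ))` on `ℂ^d × ℂ^W`. -/
noncomputable def starExt {A : Type*} {d : ℕ} (ν : Fin d → A → ℂ)
    (p q : (Fin d → ℂ) × (List A → ℂ)) : (Fin d → ℂ) × (List A → ℂ) :=
  (q.1 + q.2 [] • p.1, conv p.2 (XiOp ν p.1 q.2))

namespace Stmt10Aux

open Multiset in
lemma _root_.Multiset.noop : True := trivial

variable {A : Type*}

lemma shuffle_nil_left (w : List A) : shuffle [] w = {w} := by simp [shuffle]

lemma shuffle_nil_right (w : List A) : shuffle w [] = {w} := by cases w <;> simp [shuffle]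

lemma shuffle_cons_cons (a b : A) (u v : List A) :
    shuffle (a::u) (b::v)
      = ((shuffle u (b::v)).map (a :: ·)) + ((shuffle (a::u) v).map (b :: ·)) := by
  simp [shuffle]

lemma perm_of_mem_shuffle : ∀ (w w' u : List A), u ∈ shuffle w w' → u.Perm (w ++ w') := by
  intro w
  induction w with
  | nil =>
    intro w' u hu
    rw [shuffle_nil_left, Multiset.mem_singleton] at hu
    simp [hu]
  | cons a ua ih =>
    intro w'
    induction w' with
    | nil =>
      intro u hu
      rw [shuffle_nil_right, Multiset.mem_singleton] at hu
      simp [hu]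
    | cons b v ihv =>
      intro u hu
      rw [shuffle_cons_cons, Multiset.mem_add] at hu
      rcases hu with hu | hu
      · rcases Multiset.mem_map.1 hu with ⟨t, ht, rfl⟩
        exact List.Perm.cons a (ih _ _ ht)
      · rcases Multiset.mem_map.1 hu with ⟨t, ht, rfl⟩
        refine (List.Perm.cons b (ihv _ ht)).trans ?_
        exact (List.perm_middle).symm

lemma length_of_mem_shuffle {w w' u : List A} (hu : u ∈ shuffle w w') :
    u.length = w.length + w'.length := by
  have := (perm_of_mem_shuffle w w' u hu).length_eq
  simpa using this

/-! ### Deconcatenation coproduct -/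

def cop (w : List A) : Multiset (List A × List A) :=
  (Multiset.range (w.length + 1)).map (fun i => (w.take i, w.drop i))

lemma cop_nil : cop ([] : List A) = {([], [])} := rfl

lemma cop_cons (a : A) (w : List A) :
    cop (a :: w) = ([], a :: w) ::ₘ (cop w).map (fun p => (a :: p.1, p.2)) := by
  unfold cop
  have h : (a :: w).length + 1 = 1 + (w.length + 1) := by simp [Nat.add_comm]
  rw [h, Multiset.range_add, Multiset.map_add, ← Multiset.singleton_add]
  congr 1
  rw [Multiset.map_map, Multiset.map_map]
  apply Multiset.map_congr rfl
  intro i _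
  simp [Nat.add_comm 1 i]

def sprod (M N : Multiset (List A)) : Multiset (List A × List A) :=
  M.bind (fun a => N.map (fun b => (a, b)))

lemma bind_singleton_id {α : Type*} (s : Multiset α) :
    (s.bind fun x => ({x} : Multiset α)) = s := by
  simpa using Multiset.bind_singleton (s := s) id

lemma sprod_add_left (M N X : Multiset (List A)) :
    sprod (M + N) X = sprod M X + sprod N X := by
  simp [sprod, Multiset.add_bind]

lemma sprod_map_left (f : List A → List A) (M X : Multiset (List A)) :
    sprod (M.map f) X = (sprod M X).map (fun r => (f r.1, r.2)) := by
  simp [sprod, Multiset.bind_map, Multiset.map_bind, Multiset.map_map, Function.comp]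

lemma bialg : ∀ w w' : List A,
    (shuffle w w').bind cop
      = (cop w).bind (fun p => (cop w').bind (fun q =>
          sprod (shuffle p.1 q.1) (shuffle p.2 q.2))) := by
  intro w
  induction w with
  | nil =>
    intro w'
    rw [shuffle_nil_left, cop_nil]
    simp [Multiset.singleton_bind, shuffle_nil_left, sprod, Multiset.singleton_bind,
      Multiset.bind_singleton, Multiset.map_id']
    exact (bind_singleton_id _).symm
  | cons a u ihu =>
    intro w'
    induction w' with
    | nil =>
      rw [shuffle_nil_right, cop_nil]
      simp [Multiset.singleton_bind, shuffle_nil_right, sprod,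
        Multiset.bind_singleton, Multiset.map_id']
      exact (bind_singleton_id _).symm
    | cons b v ihv =>
      rw [shuffle_cons_cons, Multiset.add_bind, Multiset.bind_map, Multiset.bind_map]
      simp only [cop_cons, Multiset.bind_cons]
      rw [← Multiset.map_bind, ← Multiset.map_bind, ihu, ihv]
      simp only [cop_cons, Multiset.cons_bind, Multiset.bind_map, Multiset.map_bind,
        shuffle_nil_left, shuffle_nil_right, shuffle_cons_cons, sprod_add_left,
        sprod_map_left, sprod, Multiset.singleton_bind, Multiset.map_add, Multiset.map_map,
        Function.comp, Multiset.bind_add, Multiset.add_bind]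
      abel

/-! ### conv as a sum over the coproduct, unit laws, associativity -/

lemma conv_eq_cop (x y : List A → ℂ) (w : List A) :
    conv x y w = ((cop w).map (fun p => x p.1 * y p.2)).sum := by
  unfold cop
  rw [Multiset.map_map]
  rfl

lemma mul_sum_map {α β : Type*} (M : Multiset α) (N : Multiset β) (F : α → ℂ) (G : β → ℂ) :
    (M.map F).sum * (N.map G).sum = (M.map (fun p => (N.map (fun q => F p * G q)).sum)).sum := by
  rw [← Multiset.sum_map_mul_right]
  apply congrArg
  apply Multiset.map_congr rfl
  intro p _
  rw [Multiset.sum_map_mul_left]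

lemma sum_over_sprod (M N : Multiset (List A)) (f g : List A → ℂ) :
    ((sprod M N).map (fun r => f r.1 * g r.2)).sum = (M.map f).sum * (N.map g).sum := by
  rw [mul_sum_map]
  simp [sprod, Multiset.map_bind, Multiset.sum_bind, Multiset.map_map, Function.comp]

lemma conv_isGrp {γ δ : List A → ℂ} (hγ : isGrp γ) (hδ : isGrp δ) : isGrp (conv γ δ) := by
  constructor
  · simp [conv, hγ.1, hδ.1]
  · intro w w'
    rw [conv_eq_cop, conv_eq_cop, mul_sum_map]
    have hpq : ∀ p q : List A × List A,
        (γ p.1 * δ p.2) * (γ q.1 * δ q.2)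
          = ((sprod (shuffle p.1 q.1) (shuffle p.2 q.2)).map (fun r => γ r.1 * δ r.2)).sum := by
      intro p q
      rw [sum_over_sprod, ← hγ.2, ← hδ.2]
      ring
    calc ((cop w).map (fun p => ((cop w').map (fun q =>
            (γ p.1 * δ p.2) * (γ q.1 * δ q.2))).sum)).sum
        = (((cop w).bind (fun p => (cop w').bind (fun q =>
            sprod (shuffle p.1 q.1) (shuffle p.2 q.2)))).map (fun r => γ r.1 * δ r.2)).sum := by
          rw [Multiset.map_bind, Multiset.sum_bind]
          apply congrArg
          apply Multiset.map_congr rfl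
          intro p _
          rw [Multiset.map_bind, Multiset.sum_bind]
          apply congrArg
          apply Multiset.map_congr rfl
          intro q _
          exact hpq p q
      _ = (((shuffle w w').bind cop).map (fun r => γ r.1 * δ r.2)).sum := by rw [← bialg]
      _ = ((shuffle w w').map (conv γ δ)).sum := by
          rw [Multiset.map_bind, Multiset.sum_bind]
          apply congrArg
          apply Multiset.map_congr rfl
          intro u _
          exact (conv_eq_cop γ δ u).symm

lemma unit_isGrp : isGrp (unitCW : List A → ℂ) := by
  constructor
  · rfl
  · intro w w'
    cases w with
    | nil =>
      rw [shuffle_nil_left]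
      simp [unitCW]
    | cons a u =>
      cases w' with
      | nil =>
        rw [shuffle_nil_right]
        simp [unitCW]
      | cons b v =>
        rw [shuffle_cons_cons]
        have h1 : ∀ (c : A) (M : Multiset (List A)),
            ((M.map (c :: ·)).map (unitCW : List A → ℂ)).sum = 0 := by
          intro c M
          rw [Multiset.map_map]
          have : ∀ x ∈ M, ((unitCW : List A → ℂ) ∘ fun x => c :: x) x = 0 := fun x _ => rfl
          rw [Multiset.map_congr rfl this]
          simp
        rw [Multiset.map_add, Multiset.sum_add, h1, h1]
        simp [unitCW]

lemma conv_unit_right (x : List A → ℂ) : conv x unitCW = x := by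
  funext w
  unfold conv
  rw [Finset.sum_eq_single w.length]
  · simp [unitCW]
  · intro i hi hne
    have hi' : i < w.length + 1 := Finset.mem_range.mp hi
    have : w.drop i ≠ [] := by
      intro h
      have := List.drop_eq_nil_iff.mp h
      omega
    have hz : (unitCW : List A → ℂ) (w.drop i) = 0 := by
      cases h : w.drop i with
      | nil => exact absurd h this
      | cons c l => simp [unitCW]
    rw [hz, mul_zero]
  · intro h
    exact absurd (Finset.self_mem_range_succ w.length) h

lemma conv_unit_left (x : List A → ℂ) : conv unitCW x = x := by
  funext w
  unfold conv
  rw [Finset.sum_eq_single 0]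
  · simp [unitCW]
  · intro i hi hne
    have hi' : i < w.length + 1 := Finset.mem_range.mp hi
    have : w.take i ≠ [] := by
      intro h
      rcases List.take_eq_nil_iff.mp h with h | h
      · exact hne h
      · subst h
        simp at hi'
        exact hne (by omega)
    have hz : (unitCW : List A → ℂ) (w.take i) = 0 := by
      cases h : w.take i with
      | nil => exact absurd h this
      | cons c l => simp [unitCW]
    rw [hz, zero_mul]
  · intro h
    exact absurd (Finset.mem_range.mpr (Nat.succ_pos _)) h

lemma conv_assoc (x y z : List A → ℂ) : conv (conv x y) z = conv x (conv y z) := by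
  funext w
  unfold conv
  have L : ∀ j ∈ Finset.range (w.length + 1),
      (∑ i ∈ Finset.range ((w.take j).length + 1), x ((w.take j).take i) * y ((w.take j).drop i))
          * z (w.drop j)
        = ∑ i ∈ Finset.range (j + 1),
            x (w.take i) * (y ((w.drop i).take (j - i)) * z (w.drop j)) := by
    intro j hj
    have hj' : j ≤ w.length := Nat.lt_succ_iff.mp (Finset.mem_range.mp hj)
    have hlen : (w.take j).length = j := by
      rw [List.length_take]
      omega
    rw [hlen, Finset.sum_mul]
    apply Finset.sum_congr rfl
    intro i hi
    have hi' : i ≤ j := Nat.lt_succ_iff.mp (Finset.mem_range.mp hi)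
    rw [List.take_take, min_eq_left hi', List.drop_take]
    ring
  rw [Finset.sum_congr rfl L]
  have R : ∀ i ∈ Finset.range (w.length + 1),
      x (w.take i) * (∑ k ∈ Finset.range ((w.drop i).length + 1),
          y ((w.drop i).take k) * z ((w.drop i).drop k))
        = ∑ j ∈ Finset.Ico i (w.length + 1),
            x (w.take i) * (y ((w.drop i).take (j - i)) * z (w.drop j)) := by
    intro i hi
    have hi' : i ≤ w.length := Nat.lt_succ_iff.mp (Finset.mem_range.mp hi)
    rw [Finset.sum_Ico_eq_sum_range]
    have hlen : (w.drop i).length = w.length - i := by simp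
    have hcard : w.length + 1 - i = (w.drop i).length + 1 := by omega
    rw [hcard, Finset.mul_sum]
    apply Finset.sum_congr rfl
    intro k _
    rw [List.drop_drop]
    have h1 : i + k - i = k := by omega
    rw [h1]
  rw [Finset.sum_congr rfl R]
  have hri : ∀ n : ℕ, Finset.range n = Finset.Ico 0 n := fun n => Finset.range_eq_Ico n
  rw [hri, Finset.sum_congr rfl (fun j _ => by rw [hri])]
  rw [← Finset.sum_Ico_Ico_comm 0 (w.length + 1)
      (fun i j => x (w.take i) * (y ((w.drop i).take (j - i)) * z (w.drop j)))]

/-! ### Shuffle and reversal -/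

lemma shuffle_append_singleton (a b : A) : ∀ x y : List A,
    shuffle (x ++ [a]) (y ++ [b]) =
      ((shuffle x (y ++ [b])).map (· ++ [a])) + ((shuffle (x ++ [a]) y).map (· ++ [b])) := by
  intro x
  induction x with
  | nil =>
    intro y
    induction y with
    | nil =>
      simp only [List.nil_append, shuffle_nil_left, shuffle_nil_right]
      rw [show ([a] : List A) = a :: [] from rfl, show ([b] : List A) = b :: [] from rfl,
        shuffle_cons_cons, shuffle_nil_left, shuffle_nil_right]
      simp [add_comm]
    | cons d y' ihy =>
      simp only [List.nil_append, List.cons_append] at ihy ⊢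
      rw [show (a :: [] : List A) = a :: [] from rfl]
      rw [shuffle_cons_cons, shuffle_nil_left, ihy, shuffle_cons_cons, shuffle_nil_left]
      simp only [Multiset.map_add, Multiset.map_map, Function.comp, Multiset.map_singleton,
        shuffle_nil_left, shuffle_nil_right]
      simp only [List.cons_append, List.singleton_append]
      abel
  | cons c x' ihx =>
    intro y
    induction y with
    | nil =>
      have h := ihx []
      simp only [List.nil_append, List.cons_append] at h ⊢
      rw [show ([b] : List A) = b :: [] from rfl, shuffle_cons_cons, h,
        shuffle_cons_cons, shuffle_nil_right, shuffle_nil_right]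
      simp only [Multiset.map_add, Multiset.map_map, Function.comp, Multiset.map_singleton,
        shuffle_nil_left, shuffle_nil_right]
      simp only [List.cons_append, List.singleton_append]
      abel
    | cons d y' ihy =>
      have h1 := ihx (d :: y')
      simp only [List.cons_append] at h1 ihy ⊢
      rw [shuffle_cons_cons, h1, ihy, shuffle_cons_cons, shuffle_cons_cons]
      simp only [Multiset.map_add, Multiset.map_map, Function.comp, List.cons_append]
      abel

lemma shuffle_reverse : ∀ w w' : List A,
    shuffle w.reverse w'.reverse = (shuffle w w').map List.reverse := by
  intro w
  induction w with
  | nil =>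
    intro w'
    simp [shuffle_nil_left]
  | cons a u ihu =>
    intro w'
    induction w' with
    | nil =>
      simp [shuffle_nil_right]
    | cons b v ihv =>
      rw [List.reverse_cons, List.reverse_cons, shuffle_append_singleton,
        ← List.reverse_cons, ← List.reverse_cons, ihu, ihv, shuffle_cons_cons]
      simp only [Multiset.map_add, Multiset.map_map]
      congr 1 <;> apply Multiset.map_congr rfl <;> intro t _ <;> simp

/-! ### The antipode and telescoping -/

noncomputable def Ftel (γ : List A → ℂ) : List A → List A → ℂ
  | x, [] => (-1 : ℂ) ^ x.length * ((shuffle x []).map γ).sum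
  | x, c :: y => (-1 : ℂ) ^ x.length * ((shuffle x (c :: y)).map γ).sum + Ftel γ (c :: x) y

lemma Ftel_cons (γ : List A → ℂ) : ∀ (y x : List A) (c : A),
    Ftel γ (c :: x) y = (-1 : ℂ) ^ (x.length + 1) *
      ((shuffle x y).map (fun u => γ (c :: u))).sum := by
  intro y
  induction y with
  | nil =>
    intro x c
    rw [Ftel, shuffle_nil_right, shuffle_nil_right]
    simp
  | cons e y ih =>
    intro x c
    rw [Ftel, ih (c :: x) e, shuffle_cons_cons]
    simp only [Multiset.map_add, Multiset.sum_add, Multiset.map_map, Function.comp,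
      List.length_cons]
    ring

lemma Ftel_nil_ne (γ : List A → ℂ) (c : A) (y : List A) : Ftel γ [] (c :: y) = 0 := by
  rw [Ftel, Ftel_cons, shuffle_nil_left, shuffle_nil_left]
  simp

lemma Ftel_eq_sum (γ : List A → ℂ) : ∀ (y x : List A),
    Ftel γ x y = ∑ i ∈ Finset.range (y.length + 1),
      (-1 : ℂ) ^ (x.length + i) *
        ((shuffle ((y.take i).reverse ++ x) (y.drop i)).map γ).sum := by
  intro y
  induction y with
  | nil =>
    intro x
    rw [Ftel]
    simp
  | cons c y ih =>
    intro x
    rw [Ftel, ih (c :: x)]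
    have hlen : (c :: y).length + 1 = y.length + 1 + 1 := rfl
    rw [hlen, Finset.sum_range_succ'
      (fun i => (-1 : ℂ) ^ (x.length + i) *
        ((shuffle (((c :: y).take i).reverse ++ x) ((c :: y).drop i)).map γ).sum) (y.length + 1)]
    have hA : (-1 : ℂ) ^ x.length * ((shuffle x (c :: y)).map γ).sum
        = (-1 : ℂ) ^ (x.length + 0) *
          ((shuffle (((c :: y).take 0).reverse ++ x) ((c :: y).drop 0)).map γ).sum := by
      simp
    have hB : (∑ i ∈ Finset.range (y.length + 1),
        (-1 : ℂ) ^ ((c :: x).length + i) *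
          ((shuffle ((y.take i).reverse ++ (c :: x)) (y.drop i)).map γ).sum)
        = ∑ i ∈ Finset.range (y.length + 1),
          (-1 : ℂ) ^ (x.length + (i + 1)) *
            ((shuffle (((c :: y).take (i + 1)).reverse ++ x) ((c :: y).drop (i + 1))).map γ).sum := by
      apply Finset.sum_congr rfl
      intro i _
      have h1 : ((c :: y).take (i + 1)).reverse ++ x = (y.take i).reverse ++ (c :: x) := by
        simp
      have h2 : (c :: y).drop (i + 1) = y.drop i := rfl
      have h3 : x.length + (i + 1) = (c :: x).length + i := by
        simp only [List.length_cons]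
        omega
      rw [h1, h2, h3]
    rw [hA, hB, add_comm]

noncomputable def antipode (γ : List A → ℂ) : List A → ℂ :=
  fun w => (-1 : ℂ) ^ w.length * γ w.reverse

lemma antipode_isGrp {γ : List A → ℂ} (hγ : isGrp γ) : isGrp (antipode γ) := by
  constructor
  · simp [antipode, hγ.1]
  · intro w w'
    have h1 : antipode γ w * antipode γ w'
        = (-1 : ℂ) ^ (w.length + w'.length) * (γ w.reverse * γ w'.reverse) := by
      simp [antipode]
      ring
    rw [h1, hγ.2 w.reverse w'.reverse]
    have h2 : shuffle w.reverse w'.reverse = (shuffle w w').map List.reverse :=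
      shuffle_reverse w w'
    rw [h2, Multiset.map_map]
    rw [← Multiset.sum_map_mul_left]
    apply congrArg
    apply Multiset.map_congr rfl
    intro u hu
    simp only [Function.comp, antipode]
    rw [length_of_mem_shuffle hu]

lemma antipode_antipode (γ : List A → ℂ) : antipode (antipode γ) = γ := by
  funext w
  simp only [antipode, List.reverse_reverse, List.length_reverse]
  rw [← mul_assoc, ← pow_add]
  rw [Even.neg_one_pow ⟨w.length, rfl⟩, one_mul]

lemma conv_antipode_left {γ : List A → ℂ} (hγ : isGrp γ) :
    conv (antipode γ) γ = unitCW := by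
  funext w
  cases w with
  | nil =>
    simp [conv, antipode, unitCW, hγ.1]
  | cons c y =>
    have h1 : conv (antipode γ) γ (c :: y) = Ftel γ [] (c :: y) := by
      rw [Ftel_eq_sum]
      unfold conv
      apply Finset.sum_congr rfl
      intro i hi
      have hi' : i ≤ (c :: y).length := Nat.lt_succ_iff.mp (Finset.mem_range.mp hi)
      have hlen : ((c :: y).take i).length = i := by
        rw [List.length_take]
        omega
      rw [antipode, hlen, List.append_nil, mul_assoc,
        hγ.2 ((c :: y).take i).reverse ((c :: y).drop i)]
      norm_num
    rw [h1, Ftel_nil_ne]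
    rfl

lemma conv_antipode_right {γ : List A → ℂ} (hγ : isGrp γ) :
    conv γ (antipode γ) = unitCW := by
  have h := conv_antipode_left (antipode_isGrp hγ)
  rwa [antipode_antipode] at h

/-! ### `nuW` and `XiOp` lemmas -/

variable {d : ℕ}

lemma nuW_nil (ν : Fin d → A → ℂ) (v : Fin d → ℂ) : nuW ν v [] = 0 := rfl

lemma nuW_append (ν : Fin d → A → ℂ) (v : Fin d → ℂ) (w₁ w₂ : List A) :
    nuW ν v (w₁ ++ w₂) = nuW ν v w₁ + nuW ν v w₂ := by
  simp [nuW]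

lemma nuW_zero (ν : Fin d → A → ℂ) (w : List A) : nuW ν 0 w = 0 := by
  have h : nuL ν 0 = fun _ => (0 : ℂ) := by
    funext ℓ
    simp [nuL]
  simp [nuW, h]

lemma nuW_add (ν : Fin d → A → ℂ) (u v : Fin d → ℂ) (w : List A) :
    nuW ν (u + v) w = nuW ν u w + nuW ν v w := by
  induction w with
  | nil => simp [nuW]
  | cons a w ih =>
    have hL : nuL ν (u + v) a = nuL ν u a + nuL ν v a := by
      simp [nuL, add_mul, Finset.sum_add_distrib]
    simp only [nuW, List.map_cons, List.sum_cons] at ih ⊢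
    rw [hL, ih]
    ring

lemma nuW_mem_shuffle (ν : Fin d → A → ℂ) (v : Fin d → ℂ) {w w' t : List A}
    (ht : t ∈ shuffle w w') : nuW ν v t = nuW ν v w + nuW ν v w' := by
  have hp := (perm_of_mem_shuffle w w' t ht).map (nuL ν v)
  have hs := hp.sum_eq
  have : nuW ν v t = nuW ν v (w ++ w') := hs
  rw [this, nuW_append]

lemma XiOp_apply_nil (ν : Fin d → A → ℂ) (v : Fin d → ℂ) (δ : List A → ℂ) :
    XiOp ν v δ [] = δ [] := by
  simp [XiOp, nuW_nil]

lemma XiOp_isGrp (ν : Fin d → A → ℂ) (v : Fin d → ℂ) {γ : List A → ℂ} (hγ : isGrp γ) :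
    isGrp (XiOp ν v γ) := by
  constructor
  · simp [XiOp, nuW_nil, hγ.1]
  · intro w w'
    have h : XiOp ν v γ w * XiOp ν v γ w'
        = Complex.exp (nuW ν v w + nuW ν v w') * (γ w * γ w') := by
      simp [XiOp, Complex.exp_add]
      ring
    rw [h, hγ.2, ← Multiset.sum_map_mul_left]
    apply congrArg
    apply Multiset.map_congr rfl
    intro t ht
    simp only [XiOp]
    rw [nuW_mem_shuffle ν v ht]

lemma XiOp_unit (ν : Fin d → A → ℂ) (v : Fin d → ℂ) :
    XiOp ν v (unitCW : List A → ℂ) = unitCW := by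
  funext w
  cases w with
  | nil =>
    have h : (unitCW : List A → ℂ) [] = 1 := rfl
    simp [XiOp, nuW_nil, h]
  | cons a u =>
    have h : (unitCW : List A → ℂ) (a :: u) = 0 := rfl
    simp [XiOp, h]

lemma XiOp_zero (ν : Fin d → A → ℂ) (δ : List A → ℂ) : XiOp ν 0 δ = δ := by
  funext w
  simp [XiOp, nuW_zero]

lemma XiOp_XiOp (ν : Fin d → A → ℂ) (u v : Fin d → ℂ) (δ : List A → ℂ) :
    XiOp ν u (XiOp ν v δ) = XiOp ν (u + v) δ := by
  funext w
  simp [XiOp, nuW_add, Complex.exp_add]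
  ring

lemma XiOp_conv (ν : Fin d → A → ℂ) (v : Fin d → ℂ) (x y : List A → ℂ) :
    XiOp ν v (conv x y) = conv (XiOp ν v x) (XiOp ν v y) := by
  funext w
  simp only [XiOp, conv, Finset.mul_sum]
  apply Finset.sum_congr rfl
  intro i _
  have h : nuW ν v w = nuW ν v (w.take i) + nuW ν v (w.drop i) := by
    conv_lhs => rw [← List.take_append_drop i w]
    rw [nuW_append]
  rw [h, Complex.exp_add]
  ring

lemma conv_apply_nil (x y : List A → ℂ) : conv x y [] = x [] * y [] := by
  simp [conv]

lemma unit_nil : (unitCW : List A → ℂ) [] = 1 := rfl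

end Stmt10Aux


open Stmt10Aux

/-- `Ḡ = ℂ^d × G` with `(u,γ)⋆(v,δ) = (v + δ_∅ u, γ★(Ξ_u δ))` is a group
with unit `(0,1)`: it is closed under `⋆`, `⋆` is associative on it, `(0,1)` is a two-sided
unit, and every element has a two-sided inverse in `Ḡ`; moreover `ℂ^d × {1}` and `{0} × G`
are subgroups (closed under `⋆` and under taking these inverses). -/
theorem stmt10 {A : Type*} [Countable A] {d : ℕ} (hd : 1 ≤ d) (ν : Fin d → A → ℂ) :
    -- Ḡ is closed under ⋆
    (∀ p q : (Fin d → ℂ) × (List A → ℂ), isGrp p.2 → isGrp q.2 →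
      isGrp (starExt ν p q).2) ∧
    -- ⋆ is associative on Ḡ
    (∀ p q r : (Fin d → ℂ) × (List A → ℂ), isGrp p.2 → isGrp q.2 → isGrp r.2 →
      starExt ν (starExt ν p q) r = starExt ν p (starExt ν q r)) ∧
    -- (0,1) ∈ Ḡ and is a two-sided unit
    isGrp (unitCW : List A → ℂ) ∧
    (∀ p : (Fin d → ℂ) × (List A → ℂ), isGrp p.2 →
      starExt ν p (0, unitCW) = p ∧ starExt ν (0, unitCW) p = p) ∧
    -- two-sided inverses in Ḡ
    (∀ p : (Fin d → ℂ) × (List A → ℂ), isGrp p.2 →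
      ∃ q : (Fin d → ℂ) × (List A → ℂ), isGrp q.2 ∧
        starExt ν p q = (0, unitCW) ∧ starExt ν q p = (0, unitCW)) ∧
    -- ℂ^d × {1} is a subgroup
    (∀ u v : Fin d → ℂ, starExt ν (u, unitCW) (v, unitCW) = (u + v, unitCW)) ∧
    (∀ u : Fin d → ℂ, starExt ν (u, unitCW) (-u, unitCW) = (0, unitCW) ∧
      starExt ν (-u, unitCW) (u, unitCW) = (0, unitCW)) ∧
    -- {0} × G is a subgroup
    (∀ γ δ : List A → ℂ, isGrp γ → isGrp δ →
      (starExt ν ((0 : Fin d → ℂ), γ) (0, δ)).1 = 0 ∧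
      isGrp (starExt ν ((0 : Fin d → ℂ), γ) (0, δ)).2) ∧
    (∀ γ : List A → ℂ, isGrp γ → ∃ γinv : List A → ℂ, isGrp γinv ∧
      starExt ν ((0 : Fin d → ℂ), γ) (0, γinv) = (0, unitCW) ∧
      starExt ν ((0 : Fin d → ℂ), γinv) (0, γ) = (0, unitCW)) := by
  refine ⟨?_, ?_, ?_, ?_, ?_, ?_, ?_, ?_, ?_⟩
  · -- closure
    intro p q hp hq
    exact conv_isGrp hp (XiOp_isGrp ν p.1 hq)
  · -- associativity
    intro p q r hp hq hr
    unfold starExt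
    refine Prod.ext ?_ ?_
    · simp only
      rw [conv_apply_nil, XiOp_apply_nil, hq.1, hr.1, mul_one, one_smul, one_smul, one_smul]
      rw [add_assoc]
    · simp only
      rw [hq.1, one_smul, XiOp_conv, XiOp_XiOp, conv_assoc, add_comm q.1 p.1]
  · -- unit in G
    exact unit_isGrp
  · -- two-sided unit
    intro p hp
    constructor
    · unfold starExt
      refine Prod.ext ?_ ?_
      · simp only
        rw [unit_nil, one_smul, zero_add]
      · simp only
        rw [XiOp_unit, conv_unit_right]
    · unfold starExt
      refine Prod.ext ?_ ?_
      · simp only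
        rw [smul_zero, add_zero]
      · simp only
        rw [XiOp_zero, conv_unit_left]
  · -- two-sided inverses
    intro p hp
    refine ⟨(-p.1, XiOp ν (-p.1) (antipode p.2)), XiOp_isGrp ν _ (antipode_isGrp hp), ?_, ?_⟩
    · unfold starExt
      refine Prod.ext ?_ ?_
      · simp only
        rw [XiOp_apply_nil, (antipode_isGrp hp).1, one_smul, neg_add_cancel]
      · simp only
        rw [XiOp_XiOp, add_neg_cancel, XiOp_zero]
        exact conv_antipode_right hp
    · unfold starExt
      refine Prod.ext ?_ ?_
      · simp only
        rw [hp.1, one_smul, add_neg_cancel]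
      · simp only
        rw [← XiOp_conv, conv_antipode_left hp, XiOp_unit]
  · -- ℂ^d × {1} closed
    intro u v
    unfold starExt
    refine Prod.ext ?_ ?_
    · simp only
      rw [unit_nil, one_smul, add_comm]
    · simp only
      rw [XiOp_unit, conv_unit_left]
  · -- ℂ^d × {1} inverses
    intro u
    constructor
    · unfold starExt
      refine Prod.ext ?_ ?_
      · simp only
        rw [unit_nil, one_smul, neg_add_cancel]
      · simp only
        rw [XiOp_unit, conv_unit_left]
    · unfold starExt
      refine Prod.ext ?_ ?_
      · simp only
        rw [unit_nil, one_smul, add_neg_cancel]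
      · simp only
        rw [XiOp_unit, conv_unit_left]
  · -- {0} × G closed
    intro γ δ hγ hδ
    constructor
    · simp only [starExt]
      rw [smul_zero, add_zero]
    · simp only [starExt]
      rw [XiOp_zero]
      exact conv_isGrp hγ hδ
  · -- {0} × G inverses
    intro γ hγ
    refine ⟨antipode γ, antipode_isGrp hγ, ?_, ?_⟩
    · unfold starExt
      refine Prod.ext ?_ ?_
      · simp only
        rw [smul_zero, add_zero]
      · simp only
        rw [XiOp_zero]
        exact conv_antipode_right hγ
    · unfold starExt
      refine Prod.ext ?_ ?_
      · simp only
        rw [smul_zero, add_zero]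
      · simp only
        rw [XiOp_zero]
        exact conv_antipode_left hγ
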